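/- The set E = {(f, U) : f ∈ U} ⊆ (ℕ → ℕ) × Opens(ℕ → ℕ) is not open for the product topology, where ℕ → ℕ carries the Baire space topology and Opens(ℕ → ℕ) carries the Scott topology. Equivalently, the evaluation is not continuous with respect to this product topology. -/

import Mathlib

open Topology TopologicalSpace

/-- The set `E = {(f, U) : f ∈ U}` is not open for the product of the Baire topology on
`ℕ → ℕ` and the Scott topology on `Opens (ℕ → ℕ)`. -/
theorem stmt3 :
    ¬ IsOpen {p : (ℕ → ℕ) × Topology.WithScott (Opens (ℕ → ℕ)) |
        p.1 ∈ Topology.WithScott.ofScott p.2} := by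
  intro h
  have f0 : ℕ → ℕ := fun _ => 0
  have hmem : ((fun _ => 0 : ℕ → ℕ), Topology.WithScott.toScott (⊤ : Opens (ℕ → ℕ))) ∈
      {p : (ℕ → ℕ) × Topology.WithScott (Opens (ℕ → ℕ)) |
        p.1 ∈ Topology.WithScott.ofScott p.2} := by
    exact trivial
  rw [isOpen_prod_iff] at h
  obtain ⟨V, W, hV, hW, hfV, hTW, hsub⟩ := h _ _ hmem
  rw [isOpen_pi_iff] at hV
  obtain ⟨I, u, hu, hIu⟩ := hV _ hfV
  set k := (I.sup id) + 1 with hk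
  have hkI : k ∉ I := by
    intro hkmem
    have := Finset.le_sup (f := id) hkmem
    simp only [id] at this
    omega
  -- the directed family of opens
  set D : ℕ → Opens (ℕ → ℕ) := fun n =>
    ⟨(fun p : ℕ → ℕ => p k) ⁻¹' Set.Iio n, (by exact (continuous_apply k : Continuous fun p : ℕ → ℕ => p k).isOpen_preimage (Set.Iio n) (isOpen_discrete _))⟩ with hD
  have hDmono : Monotone D := by
    intro m n hmn g hg
    exact lt_of_lt_of_le hg hmn
  have hscott := (Topology.IsScott.isOpen_iff_isUpperSet_and_dirSupInaccOn
    (α := Topology.WithScott (Opens (ℕ → ℕ))) (D := Set.univ) (s := W)).mp hW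
  set d : Set (Topology.WithScott (Opens (ℕ → ℕ))) :=
    Set.range (fun n => Topology.WithScott.toScott (D n)) with hd
  have hlub : IsLUB d (Topology.WithScott.toScott (⊤ : Opens (ℕ → ℕ))) := by
    constructor
    · rintro x ⟨n, rfl⟩
      exact (le_top : D n ≤ (⊤ : Opens (ℕ → ℕ)))
    · rintro b hb
      intro g _
      have : Topology.WithScott.toScott (D (g k + 1)) ∈ d := ⟨g k + 1, rfl⟩
      have hle := hb this
      exact hle (Nat.lt_succ_self _)
  have hinter : (d ∩ W).Nonempty := by
    refine hscott.2 (Set.mem_univ d) ⟨_, ⟨0, rfl⟩⟩ ?_ hlub hTW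
    rintro _ ⟨m, rfl⟩ _ ⟨n, rfl⟩
    exact ⟨Topology.WithScott.toScott (D (max m n)), ⟨max m n, rfl⟩,
      hDmono (le_max_left m n), hDmono (le_max_right m n)⟩
  obtain ⟨x, ⟨n, rfl⟩, hxW⟩ := hinter
  -- the witness function
  set g : ℕ → ℕ := fun i => if i ∈ I then 0 else n with hg
  have hgV : g ∈ V := by
    apply hIu
    intro i hi
    have : g i = 0 := by simp [hg, Finset.mem_coe.mp hi]
    rw [this]
    exact (hu i hi).2
  have : (g, Topology.WithScott.toScott (D n)) ∈
      {p : (ℕ → ℕ) × Topology.WithScott (Opens (ℕ → ℕ)) |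
        p.1 ∈ Topology.WithScott.ofScott p.2} := hsub ⟨hgV, hxW⟩
  have hgk : g k = n := by simp [hg, hkI]
  have : g k < n := this
  omega
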